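/- For every x with 0 < x < 1.371, (π² − 4x²)·tan x < x·(π² − (4 − π²/3)x² − (4/3 − 2π²/15)x⁴). -/

import Mathlib

open Real

private lemma aux_mono {f f' : ℝ → ℝ} (hf : ∀ y, HasDerivAt f (f' y) y)
    (hf' : ∀ y, 0 ≤ y → 0 ≤ f' y) (h0 : f 0 = 0) : ∀ x : ℝ, 0 ≤ x → 0 ≤ f x := by
  intro x hx
  have hm : MonotoneOn f (Set.Ici (0:ℝ)) := by
    apply monotoneOn_of_deriv_nonneg (convex_Ici 0)
    · exact fun y _ => (hf y).continuousAt.continuousWithinAt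
    · exact fun y _ => (hf y).differentiableAt.differentiableWithinAt
    · intro y hy
      rw [interior_Ici] at hy
      rw [(hf y).deriv]
      exact hf' y hy.le
  have h := hm Set.self_mem_Ici hx hx
  rwa [h0] at h

private lemma T1 : ∀ x : ℝ, 0 ≤ x → Real.sin x ≤ x := by
  intro x hx
  rcases hx.eq_or_lt with h | h
  · simp [← h]
  · exact (Real.sin_lt h).le

private lemma T2 : ∀ x : ℝ, 0 ≤ x → 0 ≤ Real.cos x - (1 - x^2/2) := by
  apply aux_mono (f' := fun y => y - Real.sin y)
  · intro y
    have h := (Real.hasDerivAt_cos y).sub (((hasDerivAt_pow 2 y).div_const 2).const_sub 1)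
    exact h.congr_deriv (by push_cast; ring)
  · intro y hy; linarith [T1 y hy]
  · norm_num

private lemma T3 : ∀ x : ℝ, 0 ≤ x → 0 ≤ Real.sin x - (x - x^3/6) := by
  apply aux_mono (f' := fun y => Real.cos y - (1 - y^2/2))
  · intro y
    have h := (Real.hasDerivAt_sin y).sub ((hasDerivAt_id' (𝕜:=ℝ) y).sub ((hasDerivAt_pow 3 y).div_const 6))
    exact h.congr_deriv (by push_cast; ring)
  · intro y hy; exact T2 y hy
  · norm_num

private lemma T4 : ∀ x : ℝ, 0 ≤ x → 0 ≤ (1 - x^2/2 + x^4/24) - Real.cos x := by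
  apply aux_mono (f' := fun y => Real.sin y - (y - y^3/6))
  · intro y
    have h := ((((hasDerivAt_pow 2 y).div_const 2).const_sub 1).add
      ((hasDerivAt_pow 4 y).div_const 24)).sub (Real.hasDerivAt_cos y)
    exact h.congr_deriv (by push_cast; ring)
  · intro y hy; exact T3 y hy
  · norm_num

private lemma T5 : ∀ x : ℝ, 0 ≤ x → 0 ≤ (x - x^3/6 + x^5/120) - Real.sin x := by
  apply aux_mono (f' := fun y => (1 - y^2/2 + y^4/24) - Real.cos y)
  · intro y
    have h := (((hasDerivAt_id' (𝕜:=ℝ) y).sub ((hasDerivAt_pow 3 y).div_const 6)).add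
      ((hasDerivAt_pow 5 y).div_const 120)).sub (Real.hasDerivAt_sin y)
    exact h.congr_deriv (by push_cast; ring)
  · intro y hy; exact T4 y hy
  · norm_num

private lemma T6 : ∀ x : ℝ, 0 ≤ x → 0 ≤ Real.cos x - (1 - x^2/2 + x^4/24 - x^6/720) := by
  apply aux_mono (f' := fun y => (y - y^3/6 + y^5/120) - Real.sin y)
  · intro y
    have h := (Real.hasDerivAt_cos y).sub (((((hasDerivAt_pow 2 y).div_const 2).const_sub 1).add
      ((hasDerivAt_pow 4 y).div_const 24)).sub ((hasDerivAt_pow 6 y).div_const 720))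
    exact h.congr_deriv (by push_cast; ring)
  · intro y hy; exact T5 y hy
  · norm_num

private lemma T7 : ∀ x : ℝ, 0 ≤ x → 0 ≤ Real.sin x - (x - x^3/6 + x^5/120 - x^7/5040) := by
  apply aux_mono (f' := fun y => Real.cos y - (1 - y^2/2 + y^4/24 - y^6/720))
  · intro y
    have h := (Real.hasDerivAt_sin y).sub ((((hasDerivAt_id' (𝕜:=ℝ) y).sub
      ((hasDerivAt_pow 3 y).div_const 6)).add ((hasDerivAt_pow 5 y).div_const 120)).sub
      ((hasDerivAt_pow 7 y).div_const 5040))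
    exact h.congr_deriv (by push_cast; ring)
  · intro y hy; exact T6 y hy
  · norm_num

private lemma T8 : ∀ x : ℝ, 0 ≤ x → 0 ≤ (1 - x^2/2 + x^4/24 - x^6/720 + x^8/40320) - Real.cos x := by
  apply aux_mono (f' := fun y => Real.sin y - (y - y^3/6 + y^5/120 - y^7/5040))
  · intro y
    have h := (((((hasDerivAt_pow 2 y).div_const 2).const_sub 1).add
      ((hasDerivAt_pow 4 y).div_const 24)).sub ((hasDerivAt_pow 6 y).div_const 720)).add
      ((hasDerivAt_pow 8 y).div_const 40320)
    exact (h.sub (Real.hasDerivAt_cos y)).congr_deriv (by push_cast; ring)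
  · intro y hy; exact T7 y hy
  · norm_num

private lemma T9 : ∀ x : ℝ, 0 ≤ x →
    0 ≤ (x - x^3/6 + x^5/120 - x^7/5040 + x^9/362880) - Real.sin x := by
  apply aux_mono (f' := fun y => (1 - y^2/2 + y^4/24 - y^6/720 + y^8/40320) - Real.cos y)
  · intro y
    have h := ((((hasDerivAt_id' (𝕜:=ℝ) y).sub ((hasDerivAt_pow 3 y).div_const 6)).add
      ((hasDerivAt_pow 5 y).div_const 120)).sub ((hasDerivAt_pow 7 y).div_const 5040)).add
      ((hasDerivAt_pow 9 y).div_const 362880)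
    exact (h.sub (Real.hasDerivAt_sin y)).congr_deriv (by push_cast; ring)
  · intro y hy; exact T8 y hy
  · norm_num

private lemma T10 : ∀ x : ℝ, 0 ≤ x →
    0 ≤ Real.cos x - (1 - x^2/2 + x^4/24 - x^6/720 + x^8/40320 - x^10/3628800) := by
  apply aux_mono (f' := fun y => (y - y^3/6 + y^5/120 - y^7/5040 + y^9/362880) - Real.sin y)
  · intro y
    have h := ((((((hasDerivAt_pow 2 y).div_const 2).const_sub 1).add
      ((hasDerivAt_pow 4 y).div_const 24)).sub ((hasDerivAt_pow 6 y).div_const 720)).add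
      ((hasDerivAt_pow 8 y).div_const 40320)).sub ((hasDerivAt_pow 10 y).div_const 3628800)
    exact ((Real.hasDerivAt_cos y).sub h).congr_deriv (by push_cast; ring)
  · intro y hy; exact T9 y hy
  · norm_num

set_option maxHeartbeats 2000000 in
theorem stmt18 (x : ℝ) (h0 : 0 < x) (h1 : x < 1.371) :
    (π ^ 2 - 4 * x ^ 2) * Real.tan x <
      x * (π ^ 2 - (4 - π ^ 2 / 3) * x ^ 2 - (4 / 3 - 2 * π ^ 2 / 15) * x ^ 4) := by
  have hpi1 := Real.pi_gt_d6
  have hpi2 := Real.pi_lt_d6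
  have hsin := T9 x h0.le
  have hcosl := T10 x h0.le
  have hcos : 0 < Real.cos x := by
    apply Real.cos_pos_of_mem_Ioo
    constructor <;> [linarith; linarith]
  have hq : 0 < π ^ 2 - 4 * x ^ 2 := by nlinarith
  have hp2 : (9.8696:ℝ) < π ^ 2 := by nlinarith
  have hx2 : x ^ 2 < 1.88 := by nlinarith
  have hx4 : x ^ 4 < 3.5344 := by nlinarith [sq_nonneg x]
  have hR : 0 < x * (π ^ 2 - (4 - π ^ 2 / 3) * x ^ 2 - (4 / 3 - 2 * π ^ 2 / 15) * x ^ 4) := by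
    have hb : 0 < π ^ 2 - (4 - π ^ 2 / 3) * x ^ 2 - (4 / 3 - 2 * π ^ 2 / 15) * x ^ 4 := by
      nlinarith [mul_nonneg (sub_nonneg.2 hp2.le) (sq_nonneg x),
        mul_nonneg (sub_nonneg.2 hp2.le) (sq_nonneg (x^2)), sq_nonneg x, sq_nonneg (x^2)]
    exact mul_pos h0 hb
  -- certificate: let t = x^2, A2(t) ≤ 0, π² ≤ s_ub, H(t) = s_ub·A2(t)+B2(t) > 0
  have ht0 : 0 ≤ x^2 := sq_nonneg x
  have ht1 : x^2 < 1.88 := hx2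
  have hA2 : (-(17/315) + 29/5670*(x^2) - 643/3628800*(x^2)^2 + 1/311040*(x^2)^3 - 1/27216000*(x^2)^4 : ℝ) ≤ 0 := by
    nlinarith [sq_nonneg (x^2), sq_nonneg ((x^2)^2), mul_nonneg (mul_nonneg ht0 ht0) ht0,
      mul_le_mul_of_nonneg_left ht1.le ht0]
  have hs : π ^ 2 ≤ (3141593/1000000 : ℝ)^2 := by nlinarith
  have hHpos : (0:ℝ) < (3141593/1000000:ℝ)^2 * (-(17/315) + 29/5670*(x^2) - 643/3628800*(x^2)^2
      + 1/311040*(x^2)^3 - 1/27216000*(x^2)^4)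
      + (8/15 - 16/315*(x^2) + 1/567*(x^2)^2 - 29/907200*(x^2)^3 + 1/2721600*(x^2)^4) := by
    nlinarith [sq_nonneg (x^2), sq_nonneg ((x^2)^2), mul_le_mul_of_nonneg_left ht1.le ht0,
      mul_le_mul_of_nonneg_left (mul_le_mul_of_nonneg_left ht1.le ht0) ht0,
      mul_nonneg (mul_nonneg ht0 ht0) ht0, mul_nonneg (mul_nonneg (mul_nonneg ht0 ht0) ht0) ht0]
  have hfac : (0:ℝ) < π^2 * (-(17/315) + 29/5670*(x^2) - 643/3628800*(x^2)^2
      + 1/311040*(x^2)^3 - 1/27216000*(x^2)^4)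
      + (8/15 - 16/315*(x^2) + 1/567*(x^2)^2 - 29/907200*(x^2)^3 + 1/2721600*(x^2)^4) := by
    nlinarith [mul_le_mul_of_nonpos_right hs hA2]
  have hx7 : (0:ℝ) < x ^ 7 := by positivity
  have key : (π ^ 2 - 4 * x ^ 2) * (x - x^3/6 + x^5/120 - x^7/5040 + x^9/362880) <
      (x * (π ^ 2 - (4 - π ^ 2 / 3) * x ^ 2 - (4 / 3 - 2 * π ^ 2 / 15) * x ^ 4)) *
        (1 - x^2/2 + x^4/24 - x^6/720 + x^8/40320 - x^10/3628800) := by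
    have hid : (x * (π ^ 2 - (4 - π ^ 2 / 3) * x ^ 2 - (4 / 3 - 2 * π ^ 2 / 15) * x ^ 4)) *
        (1 - x^2/2 + x^4/24 - x^6/720 + x^8/40320 - x^10/3628800)
        - (π ^ 2 - 4 * x ^ 2) * (x - x^3/6 + x^5/120 - x^7/5040 + x^9/362880)
        = x^7 * (π^2 * (-(17/315) + 29/5670*(x^2) - 643/3628800*(x^2)^2
          + 1/311040*(x^2)^3 - 1/27216000*(x^2)^4)
          + (8/15 - 16/315*(x^2) + 1/567*(x^2)^2 - 29/907200*(x^2)^3 + 1/2721600*(x^2)^4)) := by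
      ring
    linarith [hid, mul_pos hx7 hfac]
  rw [Real.tan_eq_sin_div_cos, ← mul_div_assoc, div_lt_iff₀ hcos]
  nlinarith [mul_le_mul_of_nonneg_left hsin hq.le, mul_le_mul_of_nonneg_left hcosl hR.le, key]
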